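/- For the bent function σ_m on (ZMod 2)^{2m} (parity of the number of 01 bit-pairs), the set σ_m⁻¹(1) is a Hadamard difference set with parameters v = 4^m, k = 2^{2m−1} − 2^{m−1}, λ = 2^{2m−2} − 2^{m−1}. -/
import Mathlib

/-- The sign-of-square function `σ_m` on bit strings: the parity of the number of
bit-pairs equal to `01`. -/
def sigma (m : ℕ) (i : Fin (2 * m) → ZMod 2) : ZMod 2 :=
  ∑ j : Fin m,
    if i ⟨2 * j.1, by have := j.2; omega⟩ = 0 ∧ i ⟨2 * j.1 + 1, by have := j.2; omega⟩ = 1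
    then 1 else 0

namespace SigmaAux

/-- The character of `ZMod 2` with values in `ℤ`. -/
def chi (a : ZMod 2) : ℤ := if a = 0 then 1 else -1

lemma chi_add (a b : ZMod 2) : chi (a + b) = chi a * chi b := by revert a b; decide

lemma chi_eq_ite (a : ZMod 2) : chi a = if a = 1 then -1 else 1 := by revert a; decide

/-- The local block function: `1` exactly on the pair `(0,1)`. -/
def f2 (v : ZMod 2 × ZMod 2) : ZMod 2 := if v.1 = 0 ∧ v.2 = 1 then 1 else 0

/-- The block sum for `σ` transported to `Fin m → ZMod 2 × ZMod 2`. -/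
def T {m : ℕ} (y : Fin m → ZMod 2 × ZMod 2) : ZMod 2 := ∑ j, f2 (y j)

lemma chi_sum {ι : Type*} (s : Finset ι) (a : ι → ZMod 2) :
    chi (∑ j ∈ s, a j) = ∏ j ∈ s, chi (a j) := by
  classical
  induction s using Finset.induction_on with
  | empty => simp [chi]
  | @insert i s' h ih => rw [Finset.sum_insert h, Finset.prod_insert h, chi_add, ih]

/-- Pairing equivalence between `Fin (2*m) → ZMod 2` and `Fin m → ZMod 2 × ZMod 2`. -/
def pe (m : ℕ) : (Fin (2 * m) → ZMod 2) ≃ (Fin m → ZMod 2 × ZMod 2) where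
  toFun x j := (x ⟨2 * j.1, by have := j.2; omega⟩, x ⟨2 * j.1 + 1, by have := j.2; omega⟩)
  invFun y i :=
    if h : i.1 % 2 = 0 then (y ⟨i.1 / 2, by have := i.2; omega⟩).1
    else (y ⟨i.1 / 2, by have := i.2; omega⟩).2
  left_inv x := by
    funext i
    rcases i with ⟨i, hi⟩
    by_cases h : i % 2 = 0 <;> simp only [h, ↓reduceDIte] <;> congr 1 <;>
      simp only [Fin.mk.injEq] <;> omega
  right_inv y := by
    funext j
    have h1 : (2 * j.1) % 2 = 0 := by omega
    have h2 : ¬ ((2 * j.1 + 1) % 2 = 0) := by omega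
    simp only [h1, h2, ↓reduceDIte]
    have e1 : (2 * j.1) / 2 = j.1 := by omega
    have e2 : (2 * j.1 + 1) / 2 = j.1 := by omega
    ext <;> simp [e1, e2]

lemma pe_add (m : ℕ) (x g : Fin (2 * m) → ZMod 2) : pe m (x + g) = pe m x + pe m g := rfl

lemma sigma_eq (m : ℕ) (x : Fin (2 * m) → ZMod 2) : sigma m x = T (pe m x) := rfl

lemma sum_chi_f2 : ∑ v : ZMod 2 × ZMod 2, chi (f2 v) = 2 := by decide

/-- Block autocorrelation. -/
def c (w : ZMod 2 × ZMod 2) : ℤ := ∑ v : ZMod 2 × ZMod 2, chi (f2 v) * chi (f2 (v + w))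

lemma c_ne_zero (w : ZMod 2 × ZMod 2) (hw : w ≠ 0) : c w = 0 := by revert w; decide

/-- Walsh sum of `σ`. -/
lemma sum_chi_sigma (m : ℕ) : ∑ x : Fin (2 * m) → ZMod 2, chi (sigma m x) = 2 ^ m := by
  have h : ∑ x : Fin (2 * m) → ZMod 2, chi (sigma m x)
      = ∑ y : Fin m → ZMod 2 × ZMod 2, chi (T y) := by
    rw [← Equiv.sum_comp (pe m) (fun y => chi (T y))]
    exact Finset.sum_congr rfl fun x _ => by rw [sigma_eq]
  rw [h]
  have h2 : ∀ y : Fin m → ZMod 2 × ZMod 2, chi (T y) = ∏ j, chi (f2 (y j)) := by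
    intro y; exact chi_sum _ _
  rw [Finset.sum_congr rfl (fun y _ => h2 y), ← Fintype.prod_sum (fun (_ : Fin m) v => chi (f2 v))]
  simp [sum_chi_f2]

/-- Autocorrelation of `σ` vanishes at nonzero shifts. -/
lemma sum_chi_corr (m : ℕ) (g : Fin (2 * m) → ZMod 2) (hg : g ≠ 0) :
    ∑ x : Fin (2 * m) → ZMod 2, chi (sigma m x) * chi (sigma m (x + g)) = 0 := by
  set u : Fin m → ZMod 2 × ZMod 2 := pe m g with hu
  have h : ∑ x : Fin (2 * m) → ZMod 2, chi (sigma m x) * chi (sigma m (x + g))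
      = ∑ y : Fin m → ZMod 2 × ZMod 2, chi (T y) * chi (T (y + u)) := by
    rw [← Equiv.sum_comp (pe m) (fun y => chi (T y) * chi (T (y + u)))]
    exact Finset.sum_congr rfl fun x _ => by rw [sigma_eq, sigma_eq, pe_add]
  rw [h]
  have h2 : ∀ y : Fin m → ZMod 2 × ZMod 2,
      chi (T y) * chi (T (y + u)) = ∏ j, chi (f2 (y j)) * chi (f2 (y j + u j)) := by
    intro y
    rw [show T y = ∑ j, f2 (y j) from rfl, show T (y + u) = ∑ j, f2 (y j + u j) from rfl,
      chi_sum, chi_sum, ← Finset.prod_mul_distrib]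
  rw [Finset.sum_congr rfl (fun y _ => h2 y),
    ← Fintype.prod_sum (fun (j : Fin m) v => chi (f2 v) * chi (f2 (v + u j)))]
  have hex : ∃ j, u j ≠ 0 := by
    by_contra hc
    push_neg at hc
    apply hg
    have : u = pe m 0 := by funext j; rw [hc j]; rfl
    exact (pe m).injective (by rw [← hu, this])
  obtain ⟨j0, hj0⟩ := hex
  apply Finset.prod_eq_zero (Finset.mem_univ j0)
  exact c_ne_zero (u j0) hj0

end SigmaAux

/-- `σ_m⁻¹(1)` is a Hadamard difference set in `(ZMod 2)^{2m}` with parameters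
`v = 4^m`, `k = 2^{2m-1} - 2^{m-1}`, `λ = 2^{2m-2} - 2^{m-1}`. -/
theorem sigma_preimage_one_hadamard_difference_set (m : ℕ) (hm : 1 ≤ m) :
    Fintype.card (Fin (2 * m) → ZMod 2) = 4 ^ m ∧
    (Finset.univ.filter (fun i : Fin (2 * m) → ZMod 2 => sigma m i = 1)).card
        = 2 ^ (2 * m - 1) - 2 ^ (m - 1) ∧
    (∀ g : Fin (2 * m) → ZMod 2, g ≠ 0 →
      (((Finset.univ.filter (fun i : Fin (2 * m) → ZMod 2 => sigma m i = 1)) ×ˢ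
        (Finset.univ.filter (fun i : Fin (2 * m) → ZMod 2 => sigma m i = 1))).filter
          (fun p => g = p.1 - p.2)).card = 2 ^ (2 * m - 2) - 2 ^ (m - 1)) ∧
    (4 : ℤ) ^ m = 4 * (((2 : ℤ) ^ (2 * m - 1) - 2 ^ (m - 1)) -
      ((2 : ℤ) ^ (2 * m - 2) - 2 ^ (m - 1))) := by
  classical
  open SigmaAux Finset in
  set s : Finset (Fin (2 * m) → ZMod 2) := univ.filter (fun i => sigma m i = 1) with hs
  have hcardV : Fintype.card (Fin (2 * m) → ZMod 2) = 2 ^ (2 * m) := by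
    simp [Fintype.card_fun]
  have E0 : (2 : ℤ) ^ (2 * m) = 2 * 2 ^ (2 * m - 1) := by
    have h := pow_succ' (2 : ℤ) (2 * m - 1)
    rw [show (2 * m - 1) + 1 = 2 * m from by omega] at h
    exact h
  have E1 : (2 : ℤ) ^ (2 * m - 1) = 2 * 2 ^ (2 * m - 2) := by
    have h := pow_succ' (2 : ℤ) (2 * m - 2)
    rw [show (2 * m - 2) + 1 = 2 * m - 1 from by omega] at h
    exact h
  have E2 : (2 : ℤ) ^ m = 2 * 2 ^ (m - 1) := by
    have h := pow_succ' (2 : ℤ) (m - 1)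
    rw [show (m - 1) + 1 = m from by omega] at h
    exact h
  have E3 : (4 : ℤ) ^ m = 2 ^ (2 * m) := by
    rw [show (4 : ℤ) = 2 ^ 2 from by norm_num, ← pow_mul]
  -- count of sigma = 1
  have hN1Z : (s.card : ℤ) = 2 ^ (2 * m - 1) - 2 ^ (m - 1) := by
    have h := sum_chi_sigma m
    have h2 : ∑ x : Fin (2 * m) → ZMod 2, chi (sigma m x)
        = ∑ x : Fin (2 * m) → ZMod 2, (if sigma m x = 1 then (-1 : ℤ) else 1) :=
      Finset.sum_congr rfl fun x _ => chi_eq_ite _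
    rw [h2, Finset.sum_ite, Finset.sum_const, Finset.sum_const] at h
    have hc : s.card + (univ.filter (fun i => ¬ sigma m i = 1)).card
        = 2 ^ (2 * m) := by
      rw [hs, Finset.card_filter_add_card_filter_not, card_univ, hcardV]
    simp only [nsmul_eq_mul, mul_one, mul_neg, mul_one] at h
    have hc' : (s.card : ℤ) + ((univ.filter (fun i => ¬ sigma m i = 1)).card : ℤ)
        = 2 ^ (2 * m) := by exact_mod_cast congrArg (Nat.cast : ℕ → ℤ) hc
    rw [← hs] at h
    linarith [h, hc']
  have hle1 : (2 : ℕ) ^ (m - 1) ≤ 2 ^ (2 * m - 1) :=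
    Nat.pow_le_pow_right (by norm_num) (by omega)
  have hle2 : (2 : ℕ) ^ (m - 1) ≤ 2 ^ (2 * m - 2) :=
    Nat.pow_le_pow_right (by norm_num) (by omega)
  refine ⟨?_, ?_, ?_, ?_⟩
  · rw [hcardV, show (4 : ℕ) = 2 ^ 2 from rfl, ← pow_mul]
  · zify [hle1]
    exact hN1Z
  · intro g hg
    have hz : ∀ u v : ZMod 2, u - v = u + v := by decide
    have hsub : ∀ a b : Fin (2 * m) → ZMod 2, a - b = a + b := by
      intro a b; funext i; exact hz (a i) (b i)
    have hinv : ∀ a : Fin (2 * m) → ZMod 2, a + a = 0 := by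
      intro a; funext i
      have : ∀ u : ZMod 2, u + u = 0 := by decide
      exact this (a i)
    set D : Finset (Fin (2 * m) → ZMod 2) :=
      univ.filter (fun x => sigma m x = 1 ∧ sigma m (x + g) = 1) with hD
    have hcd : ((s ×ˢ s).filter (fun p => g = p.1 - p.2)).card = D.card := by
      apply Finset.card_bij (fun p _ => p.1)
      · intro p hp
        simp only [Finset.mem_filter, Finset.mem_product, hs, hD, Finset.mem_univ,
          true_and] at hp ⊢
        obtain ⟨⟨h1, h2⟩, h3⟩ := hp
        refine ⟨h1, ?_⟩
        have hp2 : p.2 = p.1 + g := by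
          rw [hsub] at h3
          rw [h3, ← add_assoc, hinv, zero_add]
        rw [← hp2]; exact h2
      · intro p hp q hq hpq
        simp only [Finset.mem_filter, Finset.mem_product, hs, Finset.mem_univ,
          true_and] at hp hq
        have e1 : p.2 = p.1 - g := by rw [hp.2, sub_sub_cancel]
        have e2 : q.2 = q.1 - g := by rw [hq.2, sub_sub_cancel]
        exact Prod.ext hpq (by rw [e1, e2, hpq])
      · intro x hx
        simp only [hD, Finset.mem_filter, Finset.mem_univ, true_and] at hx
        refine ⟨(x, x + g), ?_, rfl⟩
        simp only [Finset.mem_filter, Finset.mem_product, hs, Finset.mem_univ, true_and]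
        refine ⟨⟨hx.1, hx.2⟩, ?_⟩
        rw [hsub, ← add_assoc, hinv, zero_add]
    have key : 4 * (D.card : ℤ) = 2 ^ (2 * m) - 2 * 2 ^ m := by
      have hA := sum_chi_sigma m
      have hA' : ∑ x : Fin (2 * m) → ZMod 2, chi (sigma m (x + g)) = 2 ^ m := by
        rw [← hA, ← Equiv.sum_comp (Equiv.addRight g) (fun x => chi (sigma m x))]
        exact Finset.sum_congr rfl fun x _ => by rw [Equiv.coe_addRight]
      have hC := sum_chi_corr m g hg
      have expand : ∑ x : Fin (2 * m) → ZMod 2,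
          (1 - chi (sigma m x)) * (1 - chi (sigma m (x + g)))
          = (2 : ℤ) ^ (2 * m) - 2 ^ m - 2 ^ m + 0 := by
        have pt : ∀ x : Fin (2 * m) → ZMod 2,
            (1 - chi (sigma m x)) * (1 - chi (sigma m (x + g)))
            = 1 - chi (sigma m x) - chi (sigma m (x + g))
              + chi (sigma m x) * chi (sigma m (x + g)) := fun x => by ring
        rw [Finset.sum_congr rfl fun x _ => pt x, Finset.sum_add_distrib,
          Finset.sum_sub_distrib, Finset.sum_sub_distrib, Finset.sum_const, hA, hA', hC,
          card_univ, hcardV, nsmul_eq_mul, mul_one]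
        push_cast
        ring
      have expand2 : ∑ x : Fin (2 * m) → ZMod 2,
          (1 - chi (sigma m x)) * (1 - chi (sigma m (x + g)))
          = 4 * (D.card : ℤ) := by
        have pt : ∀ a b : ZMod 2,
            (1 - chi a) * (1 - chi b) = if a = 1 ∧ b = 1 then 4 else 0 := by decide
        rw [Finset.sum_congr rfl fun x _ => pt (sigma m x) (sigma m (x + g)),
          Finset.sum_ite, Finset.sum_const, Finset.sum_const_zero, add_zero, nsmul_eq_mul,
          ← hD]
        ring
      rw [expand2] at expand
      rw [expand]; ring
    rw [hcd]
    zify [hle2]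
    linarith [key, E0, E1, E2]
  · linarith [E0, E1, E2, E3]
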